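/- arXiv:1507.00662 — 6 statements merged into one kernel-verified Lean document; each statement's English description precedes it below -/
import Mathlib

section
/- Let k ≥ 2 and θ be integers with 1 ≤ θ ≤ k−1. Let a : [k] × [k] → ℝ be a matrix with nonnegative entries, and let r_i = Σ_{j∈[k]} a_{ij} and c_j = Σ_{i∈[k]} a_{ij} denote its row and column sums. Then Σ_{i,j∈[k], i+θ≤j} r_i · c_j ≥ ((k−θ+1)/(2(k−θ))) · (Σ_{i,j∈[k], i+θ≤j} a_{ij})². -/
open Finset

/-- Let `k ≥ 2` and `θ` be integers with `1 ≤ θ ≤ k−1`. For a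
nonnegative matrix `a` indexed by `[k] × [k]` with row sums `r i = ∑ j, a i j` and
column sums `c j = ∑ i, a i j`, we have
`∑_{i+θ≤j} r i * c j ≥ ((k−θ+1)/(2(k−θ))) * (∑_{i+θ≤j} a i j)^2`. -/
theorem stmt_0 (k θ : ℕ) (hk : 2 ≤ k) (hθ1 : 1 ≤ θ) (hθk : θ + 1 ≤ k)
    (a : ℕ → ℕ → ℝ)
    (ha : ∀ i ∈ Icc 1 k, ∀ j ∈ Icc 1 k, 0 ≤ a i j) :
    ∑ p ∈ (Icc 1 k ×ˢ Icc 1 k).filter (fun p => p.1 + θ ≤ p.2),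
        (∑ j ∈ Icc 1 k, a p.1 j) * (∑ i ∈ Icc 1 k, a i p.2)
      ≥ (((k : ℝ) - θ + 1) / (2 * ((k : ℝ) - θ))) *
        (∑ p ∈ (Icc 1 k ×ˢ Icc 1 k).filter (fun p => p.1 + θ ≤ p.2), a p.1 p.2) ^ 2 := by
  classical
  set I : Finset ℕ := Icc 1 k with hIdef
  set F : ℕ → ℝ := fun j => ∑ i ∈ I.filter (fun i => i + θ ≤ j), a i j with hFdef
  set T : ℝ := ∑ p ∈ (I ×ˢ I).filter (fun p => p.1 + θ ≤ p.2), a p.1 p.2 with hTdef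
  have hF0 : ∀ j ∈ I, 0 ≤ F j := fun j hj =>
    sum_nonneg fun i hi => ha i (mem_of_mem_filter _ hi) j hj
  -- helper: pull an `if` outside a sum
  have pull : ∀ (P : Prop) [Decidable P] (s : Finset ℕ) (f : ℕ → ℝ),
      (if P then ∑ x ∈ s, f x else 0) = ∑ x ∈ s, if P then f x else 0 := by
    intro P _ s f; split <;> simp
  have hF' : ∀ j', F j' = ∑ i ∈ I, if i + θ ≤ j' then a i j' else 0 := fun j' =>
    sum_filter _ _
  -- T as a sum of the F's
  have hT : T = ∑ j ∈ I, F j := by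
    rw [hTdef, sum_filter, Finset.sum_product_right]
    exact sum_congr rfl fun j hj => (sum_filter _ _).symm
  -- abbreviations
  set Q : ℕ → ℝ := fun j => ∑ j' ∈ I.filter (fun j' => j' ≤ j), F j' with hQdef
  set G : ℕ → ℝ := fun j => ∑ i ∈ I.filter (fun i => i + θ ≤ j), ∑ j' ∈ I, a i j'
    with hGdef
  -- LHS grouped by columns
  have hLHS : (∑ p ∈ (I ×ˢ I).filter (fun p => p.1 + θ ≤ p.2),
        (∑ j ∈ I, a p.1 j) * (∑ i ∈ I, a i p.2))
      = ∑ j ∈ I, G j * (∑ i ∈ I, a i j) := by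
    rw [sum_filter, Finset.sum_product_right]
    refine sum_congr rfl fun j hj => ?_
    rw [show G j = ∑ i ∈ I.filter (fun i => i + θ ≤ j), ∑ j' ∈ I, a i j' from rfl,
      sum_mul]
    exact (sum_filter _ _).symm
  -- F j ≤ c j
  have hFc : ∀ j ∈ I, F j ≤ ∑ i ∈ I, a i j := fun j hj =>
    sum_le_sum_of_subset_of_nonneg (filter_subset _ _)
      (fun i hi _ => ha i hi j hj)
  -- Q j ≤ G j
  have hQG : ∀ j ∈ I, Q j ≤ G j := by
    intro j hj
    have hQ' : Q j = ∑ j' ∈ I, ∑ i ∈ I,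
        if j' ≤ j then (if i + θ ≤ j' then a i j' else 0) else 0 := by
      rw [show Q j = ∑ j' ∈ I.filter (fun j' => j' ≤ j), F j' from rfl, sum_filter]
      exact sum_congr rfl fun j' _ => by rw [hF', pull]
    have hG' : G j = ∑ j' ∈ I, ∑ i ∈ I, if i + θ ≤ j then a i j' else 0 := by
      rw [show G j = ∑ i ∈ I.filter (fun i => i + θ ≤ j), ∑ j' ∈ I, a i j' from rfl,
        sum_filter, Finset.sum_comm]
      exact sum_congr rfl fun i _ => pull _ _ _
    rw [hQ', hG']
    refine sum_le_sum fun j' hj' => sum_le_sum fun i hi => ?_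
    split_ifs with h1 h2 h3 h4 <;>
      first | exact le_refl _ | exact ha i hi j' hj' | omega
  -- positivity facts
  have hQ0 : ∀ j, 0 ≤ Q j := fun j =>
    sum_nonneg fun j' hj' => hF0 j' (mem_of_mem_filter _ hj')
  have hG0 : ∀ j ∈ I, 0 ≤ G j := fun j hj =>
    sum_nonneg fun i hi => sum_nonneg fun j' hj' =>
      ha i (mem_of_mem_filter _ hi) j' hj'
  -- the main comparison
  have hMain : ∑ j ∈ I, Q j * F j ≤ ∑ j ∈ I, G j * (∑ i ∈ I, a i j) :=
    sum_le_sum fun j hj => mul_le_mul (hQG j hj) (hFc j hj) (hF0 j hj) (hG0 j hj)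
  -- identity : 2 * ∑ Q F = T^2 + ∑ F^2
  have hQF : ∑ j ∈ I, Q j * F j
      = ∑ p ∈ (I ×ˢ I).filter (fun p => p.2 ≤ p.1), F p.2 * F p.1 := by
    rw [sum_filter, Finset.sum_product]
    refine (sum_congr rfl fun j hj => ?_)
    rw [show Q j = ∑ j' ∈ I.filter (fun j' => j' ≤ j), F j' from rfl, sum_mul,
      sum_filter]
  have htot : ∑ p ∈ (I ×ˢ I), F p.2 * F p.1 = T ^ 2 := by
    rw [Finset.sum_product, sq, hT, Finset.sum_mul_sum]
    exact sum_congr rfl fun j _ => sum_congr rfl fun j' _ => mul_comm _ _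
  have hsplit := Finset.sum_filter_add_sum_filter_not (I ×ˢ I)
      (fun p => p.2 ≤ p.1) (fun p => F p.2 * F p.1)
  have hswap : ∑ p ∈ (I ×ˢ I).filter (fun p => ¬ p.2 ≤ p.1), F p.2 * F p.1
      = ∑ p ∈ (I ×ˢ I).filter (fun p => p.2 < p.1), F p.2 * F p.1 := by
    refine Finset.sum_equiv (Equiv.prodComm ℕ ℕ) ?_ ?_
    · intro p
      simp only [hIdef, mem_filter, mem_product, mem_Icc, Equiv.prodComm_apply,
        Prod.fst_swap, Prod.snd_swap]
      omega
    · intro p hp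
      simp only [Equiv.prodComm_apply, Prod.fst_swap, Prod.snd_swap]
      exact mul_comm _ _
  have hAsplit := Finset.sum_filter_add_sum_filter_not
      ((I ×ˢ I).filter (fun p => p.2 ≤ p.1)) (fun p => p.2 < p.1)
      (fun p => F p.2 * F p.1)
  have hff1 : ((I ×ˢ I).filter (fun p => p.2 ≤ p.1)).filter (fun p => p.2 < p.1)
      = (I ×ˢ I).filter (fun p => p.2 < p.1) := by
    rw [filter_filter]
    exact filter_congr fun p hp => by constructor <;> intro h <;> omega
  have hff2 : ((I ×ˢ I).filter (fun p => p.2 ≤ p.1)).filter (fun p => ¬ p.2 < p.1)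
      = (I ×ˢ I).filter (fun p => p.2 = p.1) := by
    rw [filter_filter]
    exact filter_congr fun p hp => by constructor <;> intro h <;> omega
  have hdiag : ∑ p ∈ (I ×ˢ I).filter (fun p => p.2 = p.1), F p.2 * F p.1
      = ∑ j ∈ I, F j ^ 2 := by
    rw [sum_filter, Finset.sum_product]
    refine sum_congr rfl fun j hj => ?_
    rw [Finset.sum_ite_eq' I j (fun j' => F j' * F j), if_pos hj, sq]
  rw [hff1, hff2, hdiag] at hAsplit
  rw [htot, hswap] at hsplit
  have hA2 : 2 * (∑ j ∈ I, Q j * F j) = T ^ 2 + ∑ j ∈ I, F j ^ 2 := by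
    rw [hQF]; linarith [hsplit, hAsplit]
  -- Cauchy-Schwarz
  have hTsub : T = ∑ j ∈ Icc (θ + 1) k, F j := by
    rw [hT]
    refine (Finset.sum_subset ?_ ?_).symm
    · rw [hIdef]; exact Icc_subset_Icc (by omega) le_rfl
    · intro j hjI hj
      rw [hIdef, mem_Icc] at hjI
      rw [mem_Icc] at hj
      rw [hF']
      refine Finset.sum_eq_zero fun i hi => ?_
      rw [hIdef, mem_Icc] at hi
      rw [if_neg (by omega)]
  have hcard : (((Icc (θ + 1) k).card : ℕ) : ℝ) = (k : ℝ) - θ := by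
    rw [Nat.card_Icc, show k + 1 - (θ + 1) = k - θ from by omega,
      Nat.cast_sub (by omega)]
  have hCS : T ^ 2 ≤ ((k : ℝ) - θ) * ∑ j ∈ I, F j ^ 2 := by
    rw [hTsub]
    calc (∑ j ∈ Icc (θ + 1) k, F j) ^ 2
        ≤ ((Icc (θ + 1) k).card : ℝ) * ∑ j ∈ Icc (θ + 1) k, F j ^ 2 :=
          sq_sum_le_card_mul_sum_sq
      _ ≤ ((k : ℝ) - θ) * ∑ j ∈ I, F j ^ 2 := by
          rw [hcard]
          refine mul_le_mul_of_nonneg_left ?_ (by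
            have : (θ : ℝ) + 1 ≤ (k : ℝ) := by exact_mod_cast hθk
            linarith)
          refine sum_le_sum_of_subset_of_nonneg ?_ (fun j _ _ => sq_nonneg _)
          rw [hIdef]; exact Icc_subset_Icc (by omega) le_rfl
  -- finish
  rw [ge_iff_le, hLHS]
  have hm : (1 : ℝ) ≤ (k : ℝ) - θ := by
    have : (θ : ℝ) + 1 ≤ (k : ℝ) := by exact_mod_cast hθk
    linarith
  calc ((k : ℝ) - θ + 1) / (2 * ((k : ℝ) - θ)) * T ^ 2
      ≤ ∑ j ∈ I, Q j * F j := by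
        rw [div_mul_eq_mul_div, div_le_iff₀ (by linarith)]
        nlinarith [hCS, hA2]
    _ ≤ ∑ j ∈ I, G j * (∑ i ∈ I, a i j) := hMain
end

section
/- Let k ≥ 2 be an integer. Let x^u, x^v : [k] → ℝ be nonnegative with Σ_{i∈[k]} x^u_i = 1 and Σ_{i∈[k]} x^v_i = 1, and let y : [k] × [k] → ℝ be nonnegative with Σ_{j∈[k]} y_{ij} = x^u_i for every i ∈ [k] and Σ_{i∈[k]} y_{ij} = x^v_j for every j ∈ [k]. Then Σ_{i,j∈[k], i<j} (1/(2k) + x^u_i/2) · (1/(2k) + x^v_j/2) ≥ (1/2) · Σ_{i,j∈[k], i<j} y_{ij}. (In particular, independently assigning each endpoint of an edge label i with probability 1/(2k) + x_i/2 satisfies the edge with probability at least half its LP contribution.) -/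
open Finset

lemma tri_sum (s : Finset ℕ) (g : ℕ → ℝ) :
    2 * (∑ i ∈ s, ∑ j ∈ s, if i < j then g i * g j else 0)
      = (∑ i ∈ s, g i) ^ 2 - ∑ i ∈ s, g i ^ 2 := by
  have key : ∀ i j : ℕ, g i * g j
      = (if i < j then g i * g j else 0) + (if j < i then g i * g j else 0)
        + (if i = j then g i * g j else 0) := by
    intro i j
    split_ifs <;> first | (exfalso; omega) | ring
  have h : (∑ i ∈ s, g i) ^ 2 = ∑ i ∈ s, ∑ j ∈ s, g i * g j := by
    rw [sq, Finset.sum_mul_sum]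
  have hdiag : ∀ i ∈ s, (∑ j ∈ s, if i = j then g i * g j else 0) = g i ^ 2 := by
    intro i hi
    rw [Finset.sum_ite_eq s i (fun j => g i * g j), if_pos hi, sq]
  have h2 : ∑ i ∈ s, ∑ j ∈ s, g i * g j
      = (∑ i ∈ s, ∑ j ∈ s, if i < j then g i * g j else 0)
        + (∑ i ∈ s, ∑ j ∈ s, if j < i then g i * g j else 0)
        + ∑ i ∈ s, g i ^ 2 := by
    calc ∑ i ∈ s, ∑ j ∈ s, g i * g j
        = ∑ i ∈ s, ((∑ j ∈ s, if i < j then g i * g j else 0)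
            + (∑ j ∈ s, if j < i then g i * g j else 0)
            + (∑ j ∈ s, if i = j then g i * g j else 0)) := by
          apply Finset.sum_congr rfl
          intro i _
          rw [← Finset.sum_add_distrib, ← Finset.sum_add_distrib]
          exact Finset.sum_congr rfl fun j _ => key i j
      _ = _ := by
          rw [Finset.sum_add_distrib, Finset.sum_add_distrib]
          congr 1
          exact Finset.sum_congr rfl hdiag
  have h4 : (∑ i ∈ s, ∑ j ∈ s, if j < i then g i * g j else 0)
      = ∑ i ∈ s, ∑ j ∈ s, if i < j then g i * g j else 0 := by
    rw [Finset.sum_comm]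
    apply Finset.sum_congr rfl
    intro i _
    apply Finset.sum_congr rfl
    intro j _
    split_ifs <;> ring
  rw [h, h2, h4]
  ring



lemma split4 (s t : Finset ℕ) (a b f g : ℕ → ℕ → ℝ) :
    (∑ i ∈ s, ∑ j ∈ t, if i < j then a i j + b i j + f i j + g i j else 0)
      = (∑ i ∈ s, ∑ j ∈ t, if i < j then a i j else 0)
        + (∑ i ∈ s, ∑ j ∈ t, if i < j then b i j else 0)
        + (∑ i ∈ s, ∑ j ∈ t, if i < j then f i j else 0)
        + (∑ i ∈ s, ∑ j ∈ t, if i < j then g i j else 0) := by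
  rw [← Finset.sum_add_distrib, ← Finset.sum_add_distrib, ← Finset.sum_add_distrib]
  apply Finset.sum_congr rfl
  intro i _
  rw [← Finset.sum_add_distrib, ← Finset.sum_add_distrib, ← Finset.sum_add_distrib]
  apply Finset.sum_congr rfl
  intro j _
  split_ifs <;> ring

lemma factor_ite (s t : Finset ℕ) (r : ℝ) (f : ℕ → ℕ → ℝ) :
    (∑ i ∈ s, ∑ j ∈ t, if i < j then r * f i j else 0)
      = r * ∑ i ∈ s, ∑ j ∈ t, if i < j then f i j else 0 := by
  rw [Finset.mul_sum]
  apply Finset.sum_congr rfl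
  intro i _
  rw [Finset.mul_sum]
  apply Finset.sum_congr rfl
  intro j _
  split_ifs <;> ring




/-- Single-edge LP rounding inequality for Max-k-Ordering: if
`xu, xv` are probability vectors on `[k]` and `y` is a nonnegative matrix with row
sums `xu` and column sums `xv`, then
`∑_{i<j} (1/(2k) + xu i / 2)(1/(2k) + xv j / 2) ≥ (1/2) ∑_{i<j} y i j`. -/
theorem stmt_2 (k : ℕ) (hk : 2 ≤ k) (xu xv : ℕ → ℝ) (y : ℕ → ℕ → ℝ)
    (hxu0 : ∀ i ∈ Icc 1 k, 0 ≤ xu i) (hxv0 : ∀ i ∈ Icc 1 k, 0 ≤ xv i)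
    (hxu1 : ∑ i ∈ Icc 1 k, xu i = 1) (hxv1 : ∑ i ∈ Icc 1 k, xv i = 1)
    (hy0 : ∀ i ∈ Icc 1 k, ∀ j ∈ Icc 1 k, 0 ≤ y i j)
    (hrow : ∀ i ∈ Icc 1 k, ∑ j ∈ Icc 1 k, y i j = xu i)
    (hcol : ∀ j ∈ Icc 1 k, ∑ i ∈ Icc 1 k, y i j = xv j) :
    ∑ p ∈ (Icc 1 k ×ˢ Icc 1 k).filter (fun p => p.1 < p.2),
        (1 / (2 * (k : ℝ)) + xu p.1 / 2) * (1 / (2 * (k : ℝ)) + xv p.2 / 2)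
      ≥ (1 / 2) * ∑ p ∈ (Icc 1 k ×ˢ Icc 1 k).filter (fun p => p.1 < p.2), y p.1 p.2 := by
  have hkR : (2:ℝ) ≤ (k:ℝ) := by exact_mod_cast hk
  have hk0 : (0:ℝ) < (k:ℝ) := by linarith
  have hcard : (Icc 1 k).card = k := by simp
  rw [ge_iff_le, Finset.sum_filter, Finset.sum_filter, Finset.sum_product, Finset.sum_product]
  show (1/2) * (∑ i ∈ Icc 1 k, ∑ j ∈ Icc 1 k, if i < j then y i j else 0)
      ≤ ∑ i ∈ Icc 1 k, ∑ j ∈ Icc 1 k,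
          if i < j then (1/(2*(k:ℝ)) + xu i / 2) * (1/(2*(k:ℝ)) + xv j / 2) else 0
  set c : ℝ := 1/(2*(k:ℝ)) with hcdef
  have hck : c * (k:ℝ) = 1/2 := by
    rw [hcdef]; field_simp
  have hc0 : 0 ≤ c := by positivity
  set Fy := ∑ i ∈ Icc 1 k, ∑ j ∈ Icc 1 k, if i < j then y i j else 0 with hFy
  set U := ∑ i ∈ Icc 1 k, ∑ j ∈ Icc 1 k, if i < j then xu i else 0 with hU
  set V := ∑ i ∈ Icc 1 k, ∑ j ∈ Icc 1 k, if i < j then xv j else 0 with hV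
  set W := ∑ i ∈ Icc 1 k, ∑ j ∈ Icc 1 k, if i < j then xu i * xv j else 0 with hW
  set Q := ∑ i ∈ Icc 1 k, ∑ j ∈ Icc 1 k, if i < j then xu i * xu j else 0 with hQdef
  set N := ∑ i ∈ Icc 1 k, ∑ j ∈ Icc 1 k, if i < j then (1:ℝ) else 0 with hNdef
  -- Step A: threshold bound
  have hA : ∀ t ∈ Icc 1 k, Fy ≤ (∑ i ∈ Icc 1 k, if i < t then xu i else 0)
      + (∑ j ∈ Icc 1 k, if t < j then xv j else 0) := by
    intro t ht
    have step1 : Fy ≤ ∑ i ∈ Icc 1 k, ∑ j ∈ Icc 1 k,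
        ((if i < t then y i j else 0) + (if t < j then y i j else 0)) := by
      rw [hFy]
      apply Finset.sum_le_sum
      intro i hi
      apply Finset.sum_le_sum
      intro j hj
      have h0 := hy0 i hi j hj
      have ht1 : 1 ≤ t := (Finset.mem_Icc.mp ht).1
      have ht2 : t ≤ k := (Finset.mem_Icc.mp ht).2
      split_ifs <;> first | (exfalso; omega) | linarith
    have step2 : (∑ i ∈ Icc 1 k, ∑ j ∈ Icc 1 k,
        ((if i < t then y i j else 0) + (if t < j then y i j else 0)))
        = (∑ i ∈ Icc 1 k, if i < t then xu i else 0)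
          + (∑ j ∈ Icc 1 k, if t < j then xv j else 0) := by
      have e1 : (∑ i ∈ Icc 1 k, ∑ j ∈ Icc 1 k,
          ((if i < t then y i j else 0) + (if t < j then y i j else 0)))
          = (∑ i ∈ Icc 1 k, ∑ j ∈ Icc 1 k, if i < t then y i j else 0)
            + (∑ i ∈ Icc 1 k, ∑ j ∈ Icc 1 k, if t < j then y i j else 0) := by
        rw [← Finset.sum_add_distrib]
        exact Finset.sum_congr rfl fun i _ => Finset.sum_add_distrib
      rw [e1]
      congr 1
      · apply Finset.sum_congr rfl
        intro i hi
        by_cases h : i < t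
        · simp only [if_pos h]; exact hrow i hi
        · simp only [if_neg h, Finset.sum_const_zero]
      · rw [Finset.sum_comm]
        apply Finset.sum_congr rfl
        intro j hj
        by_cases h : t < j
        · simp only [if_pos h]; exact hcol j hj
        · simp only [if_neg h, Finset.sum_const_zero]
    linarith [step1, step2.symm.le, step2.le]
  -- Step B: uniform averaging
  have hUV : (k:ℝ) * Fy ≤ U + V := by
    have e0 : (k:ℝ) * Fy = ∑ _t ∈ Icc 1 k, Fy := by
      rw [Finset.sum_const, hcard, nsmul_eq_mul]
    rw [e0]
    calc ∑ t ∈ Icc 1 k, Fy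
        ≤ ∑ t ∈ Icc 1 k, ((∑ i ∈ Icc 1 k, if i < t then xu i else 0)
            + (∑ j ∈ Icc 1 k, if t < j then xv j else 0)) := Finset.sum_le_sum hA
      _ = U + V := by
          rw [Finset.sum_add_distrib]
          congr 1
          rw [Finset.sum_comm]
  -- Step C: xu-weighted averaging
  have hQW : Fy ≤ Q + W := by
    calc Fy = ∑ t ∈ Icc 1 k, xu t * Fy := by rw [← Finset.sum_mul, hxu1, one_mul]
      _ ≤ ∑ t ∈ Icc 1 k, xu t * ((∑ i ∈ Icc 1 k, if i < t then xu i else 0)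
            + (∑ j ∈ Icc 1 k, if t < j then xv j else 0)) := by
          apply Finset.sum_le_sum
          intro t ht
          exact mul_le_mul_of_nonneg_left (hA t ht) (hxu0 t ht)
      _ = (∑ t ∈ Icc 1 k, ∑ i ∈ Icc 1 k, if i < t then xu i * xu t else 0)
            + (∑ t ∈ Icc 1 k, ∑ j ∈ Icc 1 k, if t < j then xu t * xv j else 0) := by
          rw [← Finset.sum_add_distrib]
          apply Finset.sum_congr rfl
          intro t ht
          rw [mul_add, Finset.mul_sum, Finset.mul_sum]
          congr 1
          · apply Finset.sum_congr rfl
            intro i _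
            split_ifs <;> ring
          · apply Finset.sum_congr rfl
            intro j _
            split_ifs <;> ring
      _ = Q + W := by
          congr 1
          rw [Finset.sum_comm]
  -- diagonal identities
  have hQ : 2 * Q = 1 - ∑ i ∈ Icc 1 k, xu i ^ 2 := by
    have h := tri_sum (Icc 1 k) xu
    rw [hxu1, one_pow] at h
    exact h
  have hN : 2 * N = (k:ℝ)^2 - (k:ℝ) := by
    have h := tri_sum (Icc 1 k) (fun _ => (1:ℝ))
    simp only [mul_one, one_pow, Finset.sum_const, hcard, nsmul_eq_mul] at h
    exact h
  -- Cauchy-Schwarz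
  have hCS : (1:ℝ) ≤ (k:ℝ) * ∑ i ∈ Icc 1 k, xu i ^ 2 := by
    have h := Finset.sum_mul_sq_le_sq_mul_sq (Icc 1 k) (fun _ => (1:ℝ)) xu
    simp only [one_mul, one_pow, Finset.sum_const, hcard, nsmul_eq_mul, mul_one] at h
    rw [hxu1, one_pow] at h
    exact h
  -- expand the LHS
  have hexp : (∑ i ∈ Icc 1 k, ∑ j ∈ Icc 1 k,
      if i < j then (c + xu i / 2) * (c + xv j / 2) else 0)
      = c*c*N + (c/2)*V + (c/2)*U + (1/4)*W := by
    calc (∑ i ∈ Icc 1 k, ∑ j ∈ Icc 1 k,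
        if i < j then (c + xu i / 2) * (c + xv j / 2) else 0)
        = ∑ i ∈ Icc 1 k, ∑ j ∈ Icc 1 k,
            if i < j then (c*c) * (1:ℝ) + (c/2) * xv j + (c/2) * xu i
              + (1/4) * (xu i * xv j) else 0 := by
          apply Finset.sum_congr rfl
          intro i _
          apply Finset.sum_congr rfl
          intro j _
          split_ifs <;> ring
      _ = (∑ i ∈ Icc 1 k, ∑ j ∈ Icc 1 k, if i < j then (c*c) * (1:ℝ) else 0)
            + (∑ i ∈ Icc 1 k, ∑ j ∈ Icc 1 k, if i < j then (c/2) * xv j else 0)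
            + (∑ i ∈ Icc 1 k, ∑ j ∈ Icc 1 k, if i < j then (c/2) * xu i else 0)
            + (∑ i ∈ Icc 1 k, ∑ j ∈ Icc 1 k, if i < j then (1/4) * (xu i * xv j) else 0) :=
          split4 _ _ _ _ _ _
      _ = c*c*N + (c/2)*V + (c/2)*U + (1/4)*W := by
          rw [factor_ite, factor_ite, factor_ite, factor_ite]
  rw [hexp]
  -- final arithmetic
  have h2 : c*c*N = 1/8 - c/4 := by
    linear_combination (c*c/2) * hN + ((c*(k:ℝ) + 1/2 - c)/2) * hck
  have hSig : 2*c ≤ ∑ i ∈ Icc 1 k, xu i ^ 2 := by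
    nlinarith [hCS, hck, hk0]
  have h3 : Q ≤ 1/2 - c := by linarith
  have h4 : (c/2) * ((k:ℝ)*Fy) = Fy/4 := by linear_combination (Fy/2) * hck
  have hmul : (c/2) * ((k:ℝ)*Fy) ≤ (c/2) * (U + V) :=
    mul_le_mul_of_nonneg_left hUV (by positivity)
  have hUV2 : (c/2) * (U + V) = (c/2)*U + (c/2)*V := by ring
  linarith [h2, h3, h4, hmul, hQW, hUV2]
end

section
/- Let k ≥ 2 be an integer, let y : [k] × [k] → ℝ be nonnegative, and define x^u_i = Σ_{j∈[k]} y_{ij} and x^v_j = Σ_{i∈[k]} y_{ij}. Then Σ_{i,j∈[k], i<j} (x^u_i + x^v_j) ≥ k · Σ_{i,j∈[k], i<j} y_{ij}. -/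
open Finset

/-- Let `k ≥ 2`, `y : [k]×[k] → ℝ` nonnegative, `xu i = ∑ j, y i j`
and `xv j = ∑ i, y i j`. Then `∑_{i<j} (xu i + xv j) ≥ k ∑_{i<j} y i j`. -/
theorem stmt_3 (k : ℕ) (hk : 2 ≤ k) (y : ℕ → ℕ → ℝ)
    (hy0 : ∀ i ∈ Icc 1 k, ∀ j ∈ Icc 1 k, 0 ≤ y i j) :
    ∑ p ∈ (Icc 1 k ×ˢ Icc 1 k).filter (fun p => p.1 < p.2),
        ((∑ j ∈ Icc 1 k, y p.1 j) + (∑ i ∈ Icc 1 k, y i p.2))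
      ≥ (k : ℝ) * ∑ p ∈ (Icc 1 k ×ˢ Icc 1 k).filter (fun p => p.1 < p.2), y p.1 p.2 := by
  set S : Finset ℕ := Icc 1 k with hS
  rw [ge_iff_le, Finset.mul_sum, Finset.sum_filter, Finset.sum_filter,
    Finset.sum_product, Finset.sum_product]
  have hA : ∑ i ∈ S, ∑ j ∈ S, (if i < j then (∑ j' ∈ S, y i j') else 0)
      = ∑ i ∈ S, ∑ j ∈ S, ((k - i : ℕ) : ℝ) * y i j := by
    refine Finset.sum_congr rfl fun i hi => ?_
    rw [← Finset.sum_filter, Finset.sum_const]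
    have hi' := Finset.mem_Icc.mp hi
    have hfil : S.filter (fun j => i < j) = Icc (i + 1) k := by
      ext j; simp only [hS, Finset.mem_filter, Finset.mem_Icc]; omega
    rw [hfil, Nat.card_Icc, show k + 1 - (i + 1) = k - i from by omega,
      nsmul_eq_mul, Finset.mul_sum]
  have hB : ∑ j ∈ S, ∑ i ∈ S, (if i < j then (∑ i' ∈ S, y i' j) else 0)
      = ∑ j ∈ S, ∑ i ∈ S, ((j - 1 : ℕ) : ℝ) * y i j := by
    refine Finset.sum_congr rfl fun j hj => ?_
    rw [← Finset.sum_filter, Finset.sum_const]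
    have hj' := Finset.mem_Icc.mp hj
    have hfil : S.filter (fun i => i < j) = Icc 1 (j - 1) := by
      ext i; simp only [hS, Finset.mem_filter, Finset.mem_Icc]; omega
    rw [hfil, Nat.card_Icc, show j - 1 + 1 - 1 = j - 1 from by omega,
      nsmul_eq_mul, Finset.mul_sum]
  calc ∑ i ∈ S, ∑ j ∈ S, (if i < j then (k : ℝ) * y i j else 0)
      ≤ ∑ i ∈ S, ∑ j ∈ S, (((k - i : ℕ) : ℝ) + ((j - 1 : ℕ) : ℝ)) * y i j := by
        refine Finset.sum_le_sum fun i hi => Finset.sum_le_sum fun j hj => ?_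
        have hi' := Finset.mem_Icc.mp hi
        have hj' := Finset.mem_Icc.mp hj
        have hy := hy0 i hi j hj
        split_ifs with h
        · apply mul_le_mul_of_nonneg_right _ hy
          have : k ≤ (k - i) + (j - 1) := by omega
          calc (k : ℝ) ≤ (((k - i) + (j - 1) : ℕ) : ℝ) := by exact_mod_cast this
            _ = ((k - i : ℕ) : ℝ) + ((j - 1 : ℕ) : ℝ) := by push_cast; ring
        · positivity
    _ = (∑ i ∈ S, ∑ j ∈ S, ((k - i : ℕ) : ℝ) * y i j)
        + (∑ i ∈ S, ∑ j ∈ S, ((j - 1 : ℕ) : ℝ) * y i j) := by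
        simp [add_mul, Finset.sum_add_distrib]
    _ = (∑ i ∈ S, ∑ j ∈ S, (if i < j then (∑ j' ∈ S, y i j') else 0))
        + (∑ i ∈ S, ∑ j ∈ S, (if i < j then (∑ i' ∈ S, y i' j) else 0)) := by
        rw [hA, Finset.sum_comm (f := fun i j => (if i < j then (∑ i' ∈ S, y i' j) else 0)), hB,
          Finset.sum_comm (f := fun j i => ((j - 1 : ℕ) : ℝ) * y i j)]
    _ = ∑ i ∈ S, ∑ j ∈ S, (if i < j then (∑ j' ∈ S, y i j') + (∑ i' ∈ S, y i' j) else 0) := by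
        rw [← Finset.sum_add_distrib]
        refine Finset.sum_congr rfl fun i _ => ?_
        rw [← Finset.sum_add_distrib]
        refine Finset.sum_congr rfl fun j _ => ?_
        split <;> simp
end

section
/- Let N ≥ 2 and o be integers with 1 ≤ o ≤ N−1. Let S_u, S_v ⊆ [N] be nonempty sets with min(S_u) + o ≤ max(S_v). Let y : [N] × [N] → ℝ be nonnegative with y_{ij} = 0 whenever i ∉ S_u or j ∉ S_v, and with Σ_{i,j∈[N]} y_{ij} = 1. Define x^u_i = Σ_{j∈[N]} y_{ij}, x^v_j = Σ_{i∈[N]} y_{ij}, and the probabilities p_u(i) = x^u_i/2 + (1/4)·(𝟙[i = min(S_u)] + 𝟙[i = max(S_u)]) and p_v(j) = x^v_j/2 + (1/4)·(𝟙[j = min(S_v)] + 𝟙[j = max(S_v)]). Then Σ_{i,j∈[N], i+o≤j} p_u(i) · p_v(j) ≥ (1/4)·(1 + 1/√2) · Σ_{i,j∈[N], i+o≤j} y_{ij}. -/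
open Finset

private lemma sum_le_of_support {α : Type*} [DecidableEq α] {s t : Finset α} {f : α → ℝ}
    (hf : ∀ x ∈ t, 0 ≤ f x) (h : ∀ x ∈ s, f x ≠ 0 → x ∈ t) :
    ∑ x ∈ s, f x ≤ ∑ x ∈ t, f x := by
  have h1 : ∑ x ∈ s ∩ t, f x = ∑ x ∈ s, f x := by
    apply Finset.sum_subset Finset.inter_subset_left
    intro x hx hx2
    by_contra hne
    exact hx2 (Finset.mem_inter.mpr ⟨hx, h x hx hne⟩)
  rw [← h1]
  exact Finset.sum_le_sum_of_subset_of_nonneg Finset.inter_subset_right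
    (fun x hx _ => hf x hx)

private lemma sum_le_union {α : Type*} [DecidableEq α] {s t1 t2 : Finset α} {f : α → ℝ}
    (hf1 : ∀ x ∈ t1, 0 ≤ f x) (hf2 : ∀ x ∈ t2, 0 ≤ f x)
    (h : s ⊆ t1 ∪ t2) :
    ∑ x ∈ s, f x ≤ ∑ x ∈ t1, f x + ∑ x ∈ t2, f x := by
  calc ∑ x ∈ s, f x ≤ ∑ x ∈ t1 ∪ t2, f x :=
        Finset.sum_le_sum_of_subset_of_nonneg h (fun x hx _ =>
          (Finset.mem_union.mp hx).elim (hf1 x) (hf2 x))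
    _ ≤ ∑ x ∈ t1, f x + ∑ x ∈ t2, f x := by
        rw [← Finset.union_sdiff_self_eq_union, Finset.sum_union Finset.disjoint_sdiff]
        have h3 : ∑ x ∈ t2 \ t1, f x ≤ ∑ x ∈ t2, f x :=
          Finset.sum_le_sum_of_subset_of_nonneg Finset.sdiff_subset
            (fun x hx _ => hf2 x hx)
        linarith

private lemma step_ineq (A s g : ℝ) (hg : 0 ≤ g) :
    max (A - s) 0 ^ 2 / 2 - max (A - (s + g)) 0 ^ 2 / 2 ≤ g * max (A - s) 0 := by
  rcases le_total (A - s) 0 with h1 | h1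
  · rw [max_eq_right h1, max_eq_right (by linarith)]
    simp
  · rw [max_eq_left h1]
    rcases le_total (A - (s + g)) 0 with h2 | h2
    · rw [max_eq_right h2]; nlinarith
    · rw [max_eq_left h2]; nlinarith

private lemma prod_bound (N : ℕ) (u G : ℕ → ℝ) (A : ℝ)
    (hu : ∀ i ∈ Icc 1 N, 0 ≤ u i)
    (hG : ∀ i ∈ Icc 1 N, 0 ≤ G i)
    (hkey : ∀ i ∈ Icc 1 N, A ≤ (∑ i' ∈ (Icc 1 N).filter (· ≤ i - 1), u i') + G i)
    (husum : ∑ i ∈ Icc 1 N, u i = 1) (hA0 : 0 ≤ A) (hA1 : A ≤ 1) :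
    A ^ 2 / 2 ≤ ∑ i ∈ Icc 1 N, u i * G i := by
  set F : ℕ → ℝ := fun t => ∑ i' ∈ (Icc 1 N).filter (· ≤ t), u i' with hF
  set h : ℕ → ℝ := fun t => max (A - F t) 0 ^ 2 / 2 with hh
  have hstep : ∀ i ∈ Icc 1 N, h (i - 1) - h i ≤ u i * G i := by
    intro i hi
    obtain ⟨hi1, hiN⟩ := Finset.mem_Icc.mp hi
    have hFi : F i = F (i - 1) + u i := by
      have hs : (Icc 1 N).filter (· ≤ i) = insert i ((Icc 1 N).filter (· ≤ i - 1)) := by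
        ext x
        simp only [Finset.mem_insert, Finset.mem_filter, Finset.mem_Icc]
        omega
      show (∑ i' ∈ (Icc 1 N).filter (· ≤ i), u i') = _
      rw [hs, Finset.sum_insert (by simp only [Finset.mem_filter, Finset.mem_Icc]; omega)]
      show u i + F (i-1) = F (i-1) + u i
      ring
    have h1 : u i * max (A - F (i - 1)) 0 ≤ u i * G i := by
      apply mul_le_mul_of_nonneg_left _ (hu i hi)
      exact max_le (by linarith [hkey i hi]) (hG i hi)
    have h2 := step_ineq A (F (i - 1)) (u i) (hu i hi)
    rw [← hFi] at h2
    calc h (i - 1) - h i ≤ u i * max (A - F (i - 1)) 0 := h2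
      _ ≤ u i * G i := h1
  have htel : ∑ i ∈ Icc 1 N, (h (i - 1) - h i) = h 0 - h N := by
    rw [← Finset.Ico_add_one_right_eq_Icc, Finset.sum_Ico_eq_sum_range]
    simp only [Nat.add_sub_cancel]
    have heq : ∀ k ∈ Finset.range N, h (1 + k - 1) - h (1 + k) = h k - h (k + 1) := by
      intro k _
      congr 2 <;> omega
    rw [Finset.sum_congr rfl heq]
    exact Finset.sum_range_sub' h N
  have hF0 : F 0 = 0 := by
    show (∑ i' ∈ (Icc 1 N).filter (· ≤ 0), u i') = 0
    rw [Finset.filter_false_of_mem, Finset.sum_empty]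
    intro x hx
    simp only [Finset.mem_Icc] at hx
    omega
  have hFN : F N = 1 := by
    show (∑ i' ∈ (Icc 1 N).filter (· ≤ N), u i') = 1
    rw [Finset.filter_true_of_mem, husum]
    intro x hx
    exact (Finset.mem_Icc.mp hx).2
  have hh0 : h 0 = A ^ 2 / 2 := by
    show max (A - F 0) 0 ^ 2 / 2 = A ^ 2 / 2
    rw [hF0, sub_zero, max_eq_left hA0]
  have hhN : h N = 0 := by
    show max (A - F N) 0 ^ 2 / 2 = 0
    rw [hFN, max_eq_right (by linarith)]
    norm_num
  calc A ^ 2 / 2 = h 0 - h N := by rw [hh0, hhN]; ring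
    _ = ∑ i ∈ Icc 1 N, (h (i - 1) - h i) := htel.symm
    _ ≤ ∑ i ∈ Icc 1 N, u i * G i := Finset.sum_le_sum hstep

private lemma sum_prod_filter_left {s t : Finset ℕ} (P : ℕ → Prop) [DecidablePred P]
    (f : ℕ → ℕ → ℝ) :
    ∑ p ∈ (s ×ˢ t).filter (fun p => P p.1), f p.1 p.2
      = ∑ i ∈ s.filter P, ∑ j ∈ t, f i j := by
  rw [Finset.sum_filter, Finset.sum_product, Finset.sum_filter]
  refine Finset.sum_congr rfl fun i _ => ?_
  by_cases h : P i <;> simp [h]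

private lemma sum_prod_filter_right {s t : Finset ℕ} (P : ℕ → Prop) [DecidablePred P]
    (f : ℕ → ℕ → ℝ) :
    ∑ p ∈ (s ×ˢ t).filter (fun p => P p.2), f p.1 p.2
      = ∑ j ∈ t.filter P, ∑ i ∈ s, f i j := by
  rw [Finset.sum_filter, Finset.sum_product_right, Finset.sum_filter]
  refine Finset.sum_congr rfl fun j _ => ?_
  by_cases h : P j <;> simp [h]

/-- Single-edge rounding inequality for OffsetRMAS: with offset
`1 ≤ o ≤ N−1`, label sets `Su, Sv ⊆ [N]` with `min Su + o ≤ max Sv`, and a nonnegative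
LP matrix `y` supported on `Su × Sv` summing to `1`, the rounding probabilities
`p_u(i) = xu i / 2 + (1/4)(𝟙[i = min Su] + 𝟙[i = max Su])` (similarly `p_v`) satisfy
`∑_{i+o≤j} p_u(i) p_v(j) ≥ (1/4)(1 + 1/√2) ∑_{i+o≤j} y i j`. -/
theorem stmt_4 (N o : ℕ) (hN : 2 ≤ N) (ho1 : 1 ≤ o) (hoN : o + 1 ≤ N)
    (Su Sv : Finset ℕ) (hSu : Su ⊆ Icc 1 N) (hSv : Sv ⊆ Icc 1 N)
    (hSune : Su.Nonempty) (hSvne : Sv.Nonempty)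
    (hminmax : Su.min' hSune + o ≤ Sv.max' hSvne)
    (y : ℕ → ℕ → ℝ)
    (hy0 : ∀ i ∈ Icc 1 N, ∀ j ∈ Icc 1 N, 0 ≤ y i j)
    (hsupp : ∀ i ∈ Icc 1 N, ∀ j ∈ Icc 1 N, (i ∉ Su ∨ j ∉ Sv) → y i j = 0)
    (hsum : ∑ p ∈ Icc 1 N ×ˢ Icc 1 N, y p.1 p.2 = 1) :
    ∑ p ∈ (Icc 1 N ×ˢ Icc 1 N).filter (fun p => p.1 + o ≤ p.2),
        ((∑ j ∈ Icc 1 N, y p.1 j) / 2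
            + (1 / 4) * ((if p.1 = Su.min' hSune then (1 : ℝ) else 0)
              + (if p.1 = Su.max' hSune then (1 : ℝ) else 0)))
        * ((∑ i ∈ Icc 1 N, y i p.2) / 2
            + (1 / 4) * ((if p.2 = Sv.min' hSvne then (1 : ℝ) else 0)
              + (if p.2 = Sv.max' hSvne then (1 : ℝ) else 0)))
      ≥ (1 / 4) * (1 + 1 / Real.sqrt 2) *
        ∑ p ∈ (Icc 1 N ×ˢ Icc 1 N).filter (fun p => p.1 + o ≤ p.2), y p.1 p.2 := by
  rw [ge_iff_le]
  set a := Su.min' hSune with ha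
  set b := Su.max' hSune with hb
  set c := Sv.min' hSvne with hc
  set d := Sv.max' hSvne with hd
  have haSu : a ∈ Su := Su.min'_mem hSune
  have hdSv : d ∈ Sv := Sv.max'_mem hSvne
  have haI : a ∈ Icc 1 N := hSu haSu
  have hdI : d ∈ Icc 1 N := hSv hdSv
  set E := (Icc 1 N ×ˢ Icc 1 N).filter (fun p => p.1 + o ≤ p.2) with hE
  set A := ∑ p ∈ E, y p.1 p.2 with hA
  have hy0' : ∀ p ∈ Icc 1 N ×ˢ Icc 1 N, 0 ≤ y p.1 p.2 := fun p hp => by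
    have h := Finset.mem_product.mp hp
    exact hy0 p.1 h.1 p.2 h.2
  have hEsub : E ⊆ Icc 1 N ×ˢ Icc 1 N := by rw [hE]; exact Finset.filter_subset _ _
  have hA0 : 0 ≤ A := Finset.sum_nonneg fun p hp => hy0' p (hEsub hp)
  have hA1 : A ≤ 1 := by
    rw [hA, ← hsum]
    exact Finset.sum_le_sum_of_subset_of_nonneg hEsub (fun p hp _ => hy0' p hp)
  have hymem : ∀ p ∈ Icc 1 N ×ˢ Icc 1 N, y p.1 p.2 ≠ 0 → p.1 ∈ Su ∧ p.2 ∈ Sv := by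
    intro p hp hne
    have h := Finset.mem_product.mp hp
    by_contra hcon
    exact hne (hsupp p.1 h.1 p.2 h.2 (by tauto))
  set P := ∑ i ∈ (Icc 1 N).filter (fun i => i + o ≤ d), ∑ j ∈ Icc 1 N, y i j with hP
  set Q := ∑ j ∈ (Icc 1 N).filter (fun j => a + o ≤ j), ∑ i ∈ Icc 1 N, y i j with hQ
  have hAP : A ≤ P := by
    rw [hA, hP, ← sum_prod_filter_left (fun i => i + o ≤ d) y]
    apply sum_le_of_support
    · intro p hp
      exact hy0' p (Finset.mem_filter.mp hp).1
    · intro p hp hne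
      rw [hE] at hp
      have hpE := Finset.mem_filter.mp hp
      have h2 : p.2 ≤ d := Finset.le_max' Sv p.2 (hymem p hpE.1 hne).2
      exact Finset.mem_filter.mpr ⟨hpE.1, le_trans hpE.2 h2⟩
  have hAQ : A ≤ Q := by
    rw [hA, hQ, ← sum_prod_filter_right (fun j => a + o ≤ j) y]
    apply sum_le_of_support
    · intro p hp
      exact hy0' p (Finset.mem_filter.mp hp).1
    · intro p hp hne
      rw [hE] at hp
      have hpE := Finset.mem_filter.mp hp
      have h2 : a ≤ p.1 := Finset.min'_le Su p.1 (hymem p hpE.1 hne).1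
      exact Finset.mem_filter.mpr ⟨hpE.1, le_trans (by omega) hpE.2⟩
  set Pr := ∑ p ∈ E, (∑ j ∈ Icc 1 N, y p.1 j) * (∑ i ∈ Icc 1 N, y i p.2) with hPr
  have hAPr : A ^ 2 / 2 ≤ Pr := by
    have hrw : Pr = ∑ i ∈ Icc 1 N, (∑ j ∈ Icc 1 N, y i j) *
        (∑ j ∈ (Icc 1 N).filter (fun j => i + o ≤ j), ∑ i' ∈ Icc 1 N, y i' j) := by
      rw [hPr, hE, Finset.sum_filter, Finset.sum_product]
      refine Finset.sum_congr rfl fun i _ => ?_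
      conv_rhs => rw [Finset.mul_sum, Finset.sum_filter]
    rw [hrw]
    apply prod_bound N (fun i => ∑ j ∈ Icc 1 N, y i j)
      (fun i => ∑ j ∈ (Icc 1 N).filter (fun j => i + o ≤ j), ∑ i' ∈ Icc 1 N, y i' j) A
    · intro i hi
      exact Finset.sum_nonneg fun j hj => hy0 i hi j hj
    · intro i _
      exact Finset.sum_nonneg fun j hj =>
        Finset.sum_nonneg fun i' hi' => hy0 i' hi' j (Finset.mem_filter.mp hj).1
    · intro i hi
      have hi1 : 1 ≤ i := (Finset.mem_Icc.mp hi).1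
      have hsub : E ⊆ (Icc 1 N ×ˢ Icc 1 N).filter (fun p => p.1 ≤ i - 1)
          ∪ (Icc 1 N ×ˢ Icc 1 N).filter (fun p => i + o ≤ p.2) := by
        intro p hp
        rw [hE] at hp
        have hpE := Finset.mem_filter.mp hp
        rw [Finset.mem_union, Finset.mem_filter, Finset.mem_filter]
        have := hpE.2
        rcases le_or_gt p.1 (i - 1) with h | h
        · exact Or.inl ⟨hpE.1, h⟩
        · exact Or.inr ⟨hpE.1, by omega⟩
      have hle := sum_le_union (f := fun p => y p.1 p.2)
        (fun p hp => hy0' p (Finset.mem_filter.mp hp).1)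
        (fun p hp => hy0' p (Finset.mem_filter.mp hp).1) hsub
      rw [sum_prod_filter_left (fun x => x ≤ i - 1) y,
        sum_prod_filter_right (fun j => i + o ≤ j) y] at hle
      rw [hA]
      exact hle
    · rw [← hsum, Finset.sum_product]
    · exact hA0
    · exact hA1
  have hadE : (a, d) ∈ E := by
    rw [hE]
    exact Finset.mem_filter.mpr ⟨Finset.mem_product.mpr ⟨haI, hdI⟩, hminmax⟩
  have hdecomp : ∑ p ∈ E, ((∑ j ∈ Icc 1 N, y p.1 j) / 2 + (1/4) * (if p.1 = a then (1:ℝ) else 0))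
      * ((∑ i ∈ Icc 1 N, y i p.2) / 2 + (1/4) * (if p.2 = d then (1:ℝ) else 0))
      = Pr / 4 + P / 8 + Q / 8 + 1 / 16 := by
    have hterm : ∀ p : ℕ × ℕ,
        ((∑ j ∈ Icc 1 N, y p.1 j) / 2 + (1/4) * (if p.1 = a then (1:ℝ) else 0))
        * ((∑ i ∈ Icc 1 N, y i p.2) / 2 + (1/4) * (if p.2 = d then (1:ℝ) else 0))
        = (∑ j ∈ Icc 1 N, y p.1 j) * (∑ i ∈ Icc 1 N, y i p.2) / 4
          + (∑ j ∈ Icc 1 N, y p.1 j) * (if p.2 = d then (1:ℝ) else 0) / 8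
          + (if p.1 = a then (1:ℝ) else 0) * (∑ i ∈ Icc 1 N, y i p.2) / 8
          + (if p.1 = a then (1:ℝ) else 0) * (if p.2 = d then (1:ℝ) else 0) / 16 := by
      intro p; ring
    have hS2 : ∑ p ∈ E, (∑ j ∈ Icc 1 N, y p.1 j) * (if p.2 = d then (1:ℝ) else 0) = P := by
      rw [hE, hP, Finset.sum_filter, Finset.sum_product, Finset.sum_filter]
      refine Finset.sum_congr rfl fun i _ => ?_
      have hterm2 : ∀ j, (if i + o ≤ j then (∑ j' ∈ Icc 1 N, y i j') * (if j = d then (1:ℝ) else 0) else 0)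
          = if j = d then (if i + o ≤ d then (∑ j' ∈ Icc 1 N, y i j') else 0) else 0 := by
        intro j
        by_cases hj : j = d
        · subst hj
          by_cases h2 : i + o ≤ d <;> simp [h2]
        · by_cases h2 : i + o ≤ j <;> simp [hj, h2]
      rw [Finset.sum_congr rfl (fun j _ => hterm2 j), Finset.sum_ite_eq' (Icc 1 N) d, if_pos hdI]
    have hS3 : ∑ p ∈ E, (if p.1 = a then (1:ℝ) else 0) * (∑ i ∈ Icc 1 N, y i p.2) = Q := by
      rw [hE, hQ, Finset.sum_filter, Finset.sum_product_right, Finset.sum_filter]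
      refine Finset.sum_congr rfl fun j _ => ?_
      have hterm3 : ∀ i, (if i + o ≤ j then (if i = a then (1:ℝ) else 0) * (∑ i' ∈ Icc 1 N, y i' j) else 0)
          = if i = a then (if a + o ≤ j then (∑ i' ∈ Icc 1 N, y i' j) else 0) else 0 := by
        intro i
        by_cases hi : i = a
        · subst hi
          by_cases h2 : a + o ≤ j <;> simp [h2]
        · by_cases h2 : i + o ≤ j <;> simp [hi, h2]
      rw [Finset.sum_congr rfl (fun i _ => hterm3 i), Finset.sum_ite_eq' (Icc 1 N) a, if_pos haI]
    have hS4 : ∑ p ∈ E, (if p.1 = a then (1:ℝ) else 0) * (if p.2 = d then (1:ℝ) else 0) = 1 := by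
      have hterm4 : ∀ p : ℕ × ℕ, (if p.1 = a then (1:ℝ) else 0) * (if p.2 = d then (1:ℝ) else 0)
          = if p = (a, d) then (1:ℝ) else 0 := by
        intro p
        by_cases h1 : p.1 = a <;> by_cases h2 : p.2 = d <;> simp [h1, h2, Prod.ext_iff]
      rw [Finset.sum_congr rfl fun p _ => hterm4 p, Finset.sum_ite_eq' E (a, d), if_pos hadE]
    rw [Finset.sum_congr rfl (fun p _ => hterm p)]
    rw [Finset.sum_add_distrib, Finset.sum_add_distrib, Finset.sum_add_distrib]
    rw [← Finset.sum_div, ← Finset.sum_div, ← Finset.sum_div, ← Finset.sum_div]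
    rw [← hPr, hS2, hS3, hS4]
  have hmono : ∑ p ∈ E, ((∑ j ∈ Icc 1 N, y p.1 j) / 2 + (1/4) * (if p.1 = a then (1:ℝ) else 0))
      * ((∑ i ∈ Icc 1 N, y i p.2) / 2 + (1/4) * (if p.2 = d then (1:ℝ) else 0))
      ≤ ∑ p ∈ E, ((∑ j ∈ Icc 1 N, y p.1 j) / 2
            + (1/4) * ((if p.1 = a then (1:ℝ) else 0) + (if p.1 = b then (1:ℝ) else 0)))
        * ((∑ i ∈ Icc 1 N, y i p.2) / 2
            + (1/4) * ((if p.2 = c then (1:ℝ) else 0) + (if p.2 = d then (1:ℝ) else 0))) := by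
    apply Finset.sum_le_sum
    intro p hp
    have hpm := Finset.mem_product.mp (hEsub hp)
    have hxu0 : 0 ≤ ∑ j ∈ Icc 1 N, y p.1 j := Finset.sum_nonneg fun j hj => hy0 _ hpm.1 _ hj
    have hxv0 : 0 ≤ ∑ i ∈ Icc 1 N, y i p.2 := Finset.sum_nonneg fun i hi => hy0 _ hi _ hpm.2
    have i1 : (0:ℝ) ≤ if p.1 = a then (1:ℝ) else 0 := by split_ifs <;> norm_num
    have i2 : (0:ℝ) ≤ if p.1 = b then (1:ℝ) else 0 := by split_ifs <;> norm_num
    have i3 : (0:ℝ) ≤ if p.2 = c then (1:ℝ) else 0 := by split_ifs <;> norm_num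
    have i4 : (0:ℝ) ≤ if p.2 = d then (1:ℝ) else 0 := by split_ifs <;> norm_num
    apply mul_le_mul (by linarith) (by linarith) (by linarith) (by linarith)
  calc (1/4 : ℝ) * (1 + 1/Real.sqrt 2) * A ≤ Pr / 4 + P / 8 + Q / 8 + 1 / 16 := by
        have hs2 : Real.sqrt 2 ^ 2 = 2 := Real.sq_sqrt (by norm_num)
        have hs0 : 0 < Real.sqrt 2 := Real.sqrt_pos.mpr (by norm_num)
        have h12 : (1:ℝ) / Real.sqrt 2 = Real.sqrt 2 / 2 := by
          rw [div_eq_div_iff hs0.ne' (by norm_num : (2:ℝ) ≠ 0)]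
          nlinarith
        rw [h12]
        nlinarith [sq_nonneg (Real.sqrt 2 * A - 1), hAPr, hAP, hAQ, hA0, hs2]
    _ = ∑ p ∈ E, ((∑ j ∈ Icc 1 N, y p.1 j) / 2 + (1/4) * (if p.1 = a then (1:ℝ) else 0))
          * ((∑ i ∈ Icc 1 N, y i p.2) / 2 + (1/4) * (if p.2 = d then (1:ℝ) else 0)) := hdecomp.symm
    _ ≤ _ := hmono
end

section
/- Let N ≥ 2 and o be integers with 1 ≤ o ≤ N−1, let S_u, S_v ⊆ [N] be nonempty, and let y : [N] × [N] → ℝ be nonnegative with y_{ij} = 0 whenever i ∉ S_u or j ∉ S_v. Define x^u_i = Σ_{j∈[N]} y_{ij}, x^v_j = Σ_{i∈[N]} y_{ij}, and z = Σ_{i,j∈[N], i+o≤j} y_{ij}. Then Σ_{i∈[N], i ≤ max(S_v) − o} x^u_i + Σ_{j∈[N], j ≥ min(S_u) + o} x^v_j ≥ 2z. -/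
open Finset

/-- Let `1 ≤ o ≤ N−1`, let `Su, Sv ⊆ [N]` be nonempty, and let
`y : [N]×[N] → ℝ` be nonnegative and supported on `Su × Sv`. With marginals
`xu i = ∑ j, y i j`, `xv j = ∑ i, y i j` and `z = ∑_{i+o≤j} y i j`, we have
`∑_{i ≤ max Sv − o} xu i + ∑_{j ≥ min Su + o} xv j ≥ 2z`. -/
theorem stmt_13 (N o : ℕ) (hN : 2 ≤ N) (ho1 : 1 ≤ o) (hoN : o + 1 ≤ N)
    (Su Sv : Finset ℕ) (hSu : Su ⊆ Icc 1 N) (hSv : Sv ⊆ Icc 1 N)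
    (hSune : Su.Nonempty) (hSvne : Sv.Nonempty)
    (y : ℕ → ℕ → ℝ)
    (hy0 : ∀ i ∈ Icc 1 N, ∀ j ∈ Icc 1 N, 0 ≤ y i j)
    (hsupp : ∀ i ∈ Icc 1 N, ∀ j ∈ Icc 1 N, (i ∉ Su ∨ j ∉ Sv) → y i j = 0) :
    ∑ i ∈ (Icc 1 N).filter (fun i => i + o ≤ Sv.max' hSvne), (∑ j ∈ Icc 1 N, y i j)
      + ∑ j ∈ (Icc 1 N).filter (fun j => Su.min' hSune + o ≤ j), (∑ i ∈ Icc 1 N, y i j)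
      ≥ 2 * ∑ p ∈ (Icc 1 N ×ˢ Icc 1 N).filter (fun p => p.1 + o ≤ p.2), y p.1 p.2 := by
  classical
  set A := (Icc 1 N ×ˢ Icc 1 N).filter (fun p => p.1 + o ≤ p.2) with hA
  set A' := A.filter (fun p => y p.1 p.2 ≠ 0) with hA'
  have hAA' : ∑ p ∈ A, y p.1 p.2 = ∑ p ∈ A', y p.1 p.2 :=
    (Finset.sum_filter_ne_zero A).symm
  have hmem : ∀ p ∈ A', p.1 ∈ Icc 1 N ∧ p.2 ∈ Icc 1 N ∧ p.1 + o ≤ p.2 ∧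
      p.1 ∈ Su ∧ p.2 ∈ Sv := by
    intro p hp
    simp only [hA', hA, Finset.mem_filter, Finset.mem_product] at hp
    obtain ⟨⟨⟨h1, h2⟩, h3⟩, h4⟩ := hp
    refine ⟨h1, h2, h3, ?_, ?_⟩
    · by_contra hc
      exact h4 (hsupp _ h1 _ h2 (Or.inl hc))
    · by_contra hc
      exact h4 (hsupp _ h1 _ h2 (Or.inr hc))
  have key1 : ∑ p ∈ A, y p.1 p.2
      ≤ ∑ i ∈ (Icc 1 N).filter (fun i => i + o ≤ Sv.max' hSvne), ∑ j ∈ Icc 1 N, y i j := by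
    rw [hAA']
    have hr : ∑ i ∈ (Icc 1 N).filter (fun i => i + o ≤ Sv.max' hSvne), ∑ j ∈ Icc 1 N, y i j
        = ∑ p ∈ ((Icc 1 N).filter (fun i => i + o ≤ Sv.max' hSvne)) ×ˢ Icc 1 N,
            y p.1 p.2 := by rw [Finset.sum_product]
    rw [hr]
    apply Finset.sum_le_sum_of_subset_of_nonneg
    · intro p hp
      obtain ⟨h1, h2, h3, _, h5⟩ := hmem p hp
      simp only [Finset.mem_product, Finset.mem_filter]
      exact ⟨⟨h1, h3.trans (Sv.le_max' _ h5)⟩, h2⟩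
    · intro p hp hnp
      simp only [Finset.mem_product, Finset.mem_filter] at hp
      exact hy0 _ hp.1.1 _ hp.2
  have key2 : ∑ p ∈ A, y p.1 p.2
      ≤ ∑ j ∈ (Icc 1 N).filter (fun j => Su.min' hSune + o ≤ j), ∑ i ∈ Icc 1 N, y i j := by
    rw [hAA']
    have : ∑ j ∈ (Icc 1 N).filter (fun j => Su.min' hSune + o ≤ j), ∑ i ∈ Icc 1 N, y i j
        = ∑ p ∈ ((Icc 1 N).filter (fun j => Su.min' hSune + o ≤ j)) ×ˢ Icc 1 N,
            y p.2 p.1 := by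
      rw [Finset.sum_product]
    rw [this]
    have hswap : ∑ p ∈ A', y p.1 p.2 = ∑ p ∈ A'.image Prod.swap, y p.2 p.1 := by
      rw [Finset.sum_image]
      · simp
      · intro a _ b _ hab
        exact Prod.swap_injective hab
    rw [hswap]
    apply Finset.sum_le_sum_of_subset_of_nonneg
    · intro p hp
      simp only [Finset.mem_image] at hp
      obtain ⟨q, hq, rfl⟩ := hp
      obtain ⟨h1, h2, h3, h4, _⟩ := hmem q hq
      simp only [Finset.mem_product, Finset.mem_filter, Prod.fst_swap, Prod.snd_swap]
      exact ⟨⟨h2, le_trans (add_le_add_left (Su.min'_le _ h4) o) h3⟩, h1⟩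
    · intro p hp hnp
      simp only [Finset.mem_product, Finset.mem_filter] at hp
      exact hy0 _ hp.2 _ hp.1.1
  have := add_le_add key1 key2
  linarith
end

section
/- Let D = (V, A) be a finite digraph with a nonnegative weight function w : A → ℝ and let k ≥ 1 be an integer. Then the maximum over all labelings ℓ : V → [k] of Σ_{(u,v)∈A, ℓ(u)<ℓ(v)} w(u,v) equals the maximum of Σ_{e∈A'} w(e) over all subsets A' ⊆ A such that the digraph (V, A') contains no directed cycle and no directed path of length k. (Thus Max-k-Ordering is equivalent to finding the maximum weight subgraph that is acyclic and has no directed path of length k.) -/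
open Finset

/-- `HasDiPath A k` : the digraph with edge relation `A` contains a directed path of
length `k` (with `k` edges, on `k+1` distinct vertices). -/
def HasDiPath {V : Type*} (A : V → V → Prop) (k : ℕ) : Prop :=
  ∃ f : ℕ → V, (∀ i j, i ≤ k → j ≤ k → f i = f j → i = j) ∧
    ∀ i, i < k → A (f i) (f (i + 1))

/-- `HasDiCycle A` : the digraph with edge relation `A` contains a directed cycle. -/
def HasDiCycle {V : Type*} (A : V → V → Prop) : Prop :=
  ∃ m : ℕ, 1 ≤ m ∧ ∃ f : ℕ → V, (∀ i j, i < m → j < m → f i = f j → i = j) ∧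
    f m = f 0 ∧ ∀ i, i < m → A (f i) (f (i + 1))

/-- Along a chain where labels strictly increase on each edge, the label grows at least
linearly. -/
lemma stmt14_chain_mono {V : Type*} (ℓ : V → ℕ) (f : ℕ → V) (m : ℕ)
    (h : ∀ i, i < m → ℓ (f i) < ℓ (f (i + 1))) :
    ∀ i, i ≤ m → ℓ (f 0) + i ≤ ℓ (f i) := by
  intro i hi
  induction i with
  | zero => simp
  | succ n ih =>
    have h1 := ih (by omega)
    have h2 := h n (by omega)
    omega

/-- Given an acyclic edge set with no directed path of length `k`, there is a labeling
in `[k]` increasing along every edge. -/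
lemma stmt14_key {V : Type*} [DecidableEq V] (A' : Finset (V × V)) (k : ℕ) (hk : 1 ≤ k)
    (hc : ¬ HasDiCycle (fun u v => (u, v) ∈ A'))
    (hp : ¬ HasDiPath (fun u v => (u, v) ∈ A') k) :
    ∃ ℓ : V → ℕ, (∀ v, ℓ v ∈ Finset.Icc 1 k) ∧ ∀ p ∈ A', ℓ p.1 < ℓ p.2 := by
  classical
  set P : V → ℕ → Prop := fun v m => ∃ f : ℕ → V,
    (∀ i j, i ≤ m → j ≤ m → f i = f j → i = j) ∧ f m = v ∧
      ∀ i, i < m → (f i, f (i + 1)) ∈ A' with hPdef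
  have h0 : ∀ v, P v 0 := fun v => ⟨fun _ => v, by omega, rfl, by omega⟩
  have hbd : ∀ v m, P v m → m < k := by
    rintro v m ⟨f, hinj, -, hedge⟩
    by_contra h
    push_neg at h
    exact hp ⟨f, fun i j hi hj => hinj i j (hi.trans h) (hj.trans h),
      fun i hi => hedge i (lt_of_lt_of_le hi h)⟩
  have hbdd : ∀ v, BddAbove {m | P v m} := fun v => ⟨k, fun m hm => (hbd v m hm).le⟩
  set L : V → ℕ := fun v => sSup {m | P v m} with hLdef
  have hLmem : ∀ v, P v (L v) := fun v => Nat.sSup_mem ⟨0, h0 v⟩ (hbdd v)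
  refine ⟨fun v => L v + 1, ?_, ?_⟩
  · intro v
    have := hbd v (L v) (hLmem v)
    simp only [Finset.mem_Icc]
    omega
  · rintro ⟨u, v⟩ hmem
    obtain ⟨f, hinj, hfm, hedge⟩ := hLmem u
    -- v does not occur on the longest path ending at u, else we get a cycle
    have hv : ∀ i, i ≤ L u → f i ≠ v := by
      intro i hi hiv
      apply hc
      refine ⟨L u - i + 1, by omega,
        fun j => if j ≤ L u - i then f (i + j) else f i, ?_, ?_, ?_⟩
      · intro a b ha hb hab
        have ha' : a ≤ L u - i := by omega
        have hb' : b ≤ L u - i := by omega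
        beta_reduce at hab
        rw [if_pos ha', if_pos hb'] at hab
        have := hinj (i + a) (i + b) (by omega) (by omega) hab
        omega
      · beta_reduce
        rw [if_neg (by omega : ¬ (L u - i + 1 ≤ L u - i)), if_pos (by omega : 0 ≤ L u - i)]
        norm_num
      · intro j hj
        by_cases hjc : j < L u - i
        · beta_reduce
          rw [if_pos (by omega : j ≤ L u - i), if_pos (by omega : j + 1 ≤ L u - i)]
          have hstep := hedge (i + j) (by omega)
          have heq : i + j + 1 = i + (j + 1) := by omega
          rw [heq] at hstep
          exact hstep
        · have hje : j = L u - i := by omega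
          subst hje
          beta_reduce
          rw [if_pos (le_refl (L u - i)), if_neg (by omega : ¬ (L u - i + 1 ≤ L u - i))]
          have heq : i + (L u - i) = L u := by omega
          rw [heq, hfm, hiv]
          exact hmem
    -- extend the path by the edge (u, v)
    have hnew : P v (L u + 1) := by
      refine ⟨fun i => if i ≤ L u then f i else v, ?_, ?_, ?_⟩
      · intro a b ha hb hab
        beta_reduce at hab
        by_cases hA : a ≤ L u <;> by_cases hB : b ≤ L u
        · rw [if_pos hA, if_pos hB] at hab; exact hinj a b hA hB hab
        · rw [if_pos hA, if_neg hB] at hab; exact absurd hab (hv a hA)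
        · rw [if_neg hA, if_pos hB] at hab; exact absurd hab.symm (hv b hB)
        · omega
      · beta_reduce
        rw [if_neg (by omega : ¬ (L u + 1 ≤ L u))]
      · intro i hi
        by_cases hA : i < L u
        · beta_reduce
          rw [if_pos hA.le, if_pos (by omega : i + 1 ≤ L u)]
          exact hedge i hA
        · have : i = L u := by omega
          subst this
          beta_reduce
          rw [if_pos (le_refl (L u)), if_neg (by omega : ¬ (L u + 1 ≤ L u))]
          rw [hfm]; exact hmem
    have hle : L u + 1 ≤ L v := le_csSup (hbdd v) hnew
    simp only
    omega

/-- For a finite digraph `D = (V, A)` with nonnegative edge weights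
`w` and `k ≥ 1`, the maximum over labelings `ℓ : V → [k]` of the total weight of edges
`(u,v)` with `ℓ u < ℓ v` equals the maximum weight of a subset `A' ⊆ A` of edges such
that `(V, A')` has no directed cycle and no directed path of length `k`. -/
theorem stmt_14 {V : Type*} [Fintype V] [DecidableEq V]
    (A : V → V → Prop) [DecidableRel A]
    (w : V → V → ℝ) (hw : ∀ u v, A u v → 0 ≤ w u v) (k : ℕ) (hk : 1 ≤ k) :
    sSup {r : ℝ | ∃ ℓ : V → ℕ, (∀ v, ℓ v ∈ Finset.Icc 1 k) ∧
        r = ∑ p ∈ Finset.univ.filter (fun p : V × V => A p.1 p.2 ∧ ℓ p.1 < ℓ p.2),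
              w p.1 p.2}
      = sSup {r : ℝ | ∃ A' : Finset (V × V), (∀ p ∈ A', A p.1 p.2) ∧
          ¬ HasDiCycle (fun u v => (u, v) ∈ A') ∧
          ¬ HasDiPath (fun u v => (u, v) ∈ A') k ∧
          r = ∑ p ∈ A', w p.1 p.2} := by
  classical
  set S1 : Set ℝ := {r : ℝ | ∃ ℓ : V → ℕ, (∀ v, ℓ v ∈ Finset.Icc 1 k) ∧
      r = ∑ p ∈ Finset.univ.filter (fun p : V × V => A p.1 p.2 ∧ ℓ p.1 < ℓ p.2),
            w p.1 p.2} with hS1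
  set S2 : Set ℝ := {r : ℝ | ∃ A' : Finset (V × V), (∀ p ∈ A', A p.1 p.2) ∧
      ¬ HasDiCycle (fun u v => (u, v) ∈ A') ∧
      ¬ HasDiPath (fun u v => (u, v) ∈ A') k ∧
      r = ∑ p ∈ A', w p.1 p.2} with hS2
  set B : ℝ := ∑ p ∈ Finset.univ.filter (fun p : V × V => A p.1 p.2), w p.1 p.2 with hB
  -- boundedness
  have hbdd1 : BddAbove S1 := by
    refine ⟨B, ?_⟩
    rintro r ⟨ℓ, -, rfl⟩
    apply Finset.sum_le_sum_of_subset_of_nonneg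
    · intro p hp
      simp only [Finset.mem_filter, Finset.mem_univ, true_and] at hp ⊢
      exact hp.1
    · intro p hp _
      simp only [Finset.mem_filter, Finset.mem_univ, true_and] at hp
      exact hw p.1 p.2 hp
  have hbdd2 : BddAbove S2 := by
    refine ⟨B, ?_⟩
    rintro r ⟨A', hA', -, -, rfl⟩
    apply Finset.sum_le_sum_of_subset_of_nonneg
    · intro p hp
      simp only [Finset.mem_filter, Finset.mem_univ, true_and]
      exact hA' p hp
    · intro p hp _
      simp only [Finset.mem_filter, Finset.mem_univ, true_and] at hp
      exact hw p.1 p.2 hp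
  -- nonemptiness
  have hne1 : S1.Nonempty := ⟨_, ⟨fun _ => 1, fun v => by simp [hk], rfl⟩⟩
  have hmem0 : (0 : ℝ) ∈ S2 := by
    simp only [hS2, Set.mem_setOf_eq]
    refine ⟨∅, by simp, ?_, ?_, by simp⟩
    · rintro ⟨m, hm, f, -, -, hedge⟩
      exact absurd (hedge 0 (by omega)) (by simp)
    · rintro ⟨f, -, hedge⟩
      exact absurd (hedge 0 (by omega)) (by simp)
  have hne2 : S2.Nonempty := ⟨0, hmem0⟩
  apply le_antisymm
  · -- each labeling value is achieved by a valid edge set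
    refine csSup_le hne1 ?_
    rintro r ⟨ℓ, hℓ, rfl⟩
    refine le_csSup hbdd2 ?_
    refine ⟨Finset.univ.filter (fun p : V × V => A p.1 p.2 ∧ ℓ p.1 < ℓ p.2), ?_, ?_, ?_, rfl⟩
    · intro p hp
      simp only [Finset.mem_filter] at hp
      exact hp.2.1
    · rintro ⟨m, hm, f, hinj, hfm, hedge⟩
      have hmono : ∀ i, i < m → ℓ (f i) < ℓ (f (i + 1)) := by
        intro i hi
        have := hedge i hi
        simp only [Finset.mem_filter] at this
        exact this.2.2
      have := stmt14_chain_mono ℓ f m hmono m le_rfl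
      rw [hfm] at this
      omega
    · rintro ⟨f, hinj, hedge⟩
      have hmono : ∀ i, i < k → ℓ (f i) < ℓ (f (i + 1)) := by
        intro i hi
        have := hedge i hi
        simp only [Finset.mem_filter] at this
        exact this.2.2
      have h1 := stmt14_chain_mono ℓ f k hmono k le_rfl
      have h2 := hℓ (f 0)
      have h3 := hℓ (f k)
      simp only [Finset.mem_Icc] at h2 h3
      omega
  · -- each valid edge set value is dominated by some labeling value
    refine csSup_le hne2 ?_
    rintro r ⟨A', hA', hc, hp, rfl⟩
    obtain ⟨ℓ, hℓ, hedge⟩ := stmt14_key A' k hk hc hp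
    refine le_trans ?_ (le_csSup hbdd1 ⟨ℓ, hℓ, rfl⟩)
    apply Finset.sum_le_sum_of_subset_of_nonneg
    · intro p hp'
      simp only [Finset.mem_filter, Finset.mem_univ, true_and]
      exact ⟨hA' p hp', hedge p hp'⟩
    · intro p hp' _
      simp only [Finset.mem_filter, Finset.mem_univ, true_and] at hp'
      exact hw p.1 p.2 hp'.1
end
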